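/- Let h : ℝ² → ℝ be continuous and satisfy conditions (h1)–(h4). The rotation number function is continuous on the set of h-minimal configurations with the product topology: if (x^(k))_{k∈ℕ} are h-minimal configurations converging pointwise to an h-minimal configuration x, then ρ(x^(k)) → ρ(x) as k → ∞, where ρ denotes the rotation number (which exists for every h-minimal configuration). -/

import Mathlib

open Filter Topology MeasureTheory

/-- The finite segment of `x` between indices `j` and `k` is `h`-minimal. -/
def IsMinSegment (h : ℝ → ℝ → ℝ) (j k : ℤ) (x : ℤ → ℝ) : Prop :=
  ∀ y : ℤ → ℝ, y j = x j → y k = x k →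
    ∑ i ∈ Finset.Ico j k, h (x i) (x (i + 1)) ≤ ∑ i ∈ Finset.Ico j k, h (y i) (y (i + 1))

/-- A bi-infinite configuration is `h`-minimal if every finite segment of it is minimal. -/
def MinimalConfig (h : ℝ → ℝ → ℝ) (x : ℤ → ℝ) : Prop :=
  ∀ j k : ℤ, j < k → IsMinSegment h j k x

/-- The segment `(a, b, c)` is `h`-minimal (endpoints `a`, `c` fixed, middle point varies). -/
def MinTriple (h : ℝ → ℝ → ℝ) (a b c : ℝ) : Prop :=
  ∀ m : ℝ, h a b + h b c ≤ h a m + h m c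

/-- Condition (h1): periodicity. -/
def CondH1 (h : ℝ → ℝ → ℝ) : Prop := ∀ x x' : ℝ, h (x + 1) (x' + 1) = h x x'

/-- Condition (h2): `h (x, x+ξ) → +∞` as `|ξ| → ∞`, uniformly in `x`. -/
def CondH2 (h : ℝ → ℝ → ℝ) : Prop :=
  ∀ M : ℝ, ∃ R : ℝ, ∀ x ξ : ℝ, R ≤ |ξ| → M ≤ h x (x + ξ)

/-- Condition (h3). -/
def CondH3 (h : ℝ → ℝ → ℝ) : Prop :=
  ∀ x ξ x' ξ' : ℝ, x < ξ → x' < ξ' → h x x' + h ξ ξ' < h x ξ' + h ξ x'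

/-- Condition (h4). -/
def CondH4 (h : ℝ → ℝ → ℝ) : Prop :=
  ∀ xb x x' ξb ξ' : ℝ, MinTriple h xb x x' → MinTriple h ξb x ξ' →
    (xb ≠ ξb ∨ x' ≠ ξ') → (xb - ξb) * (x' - ξ') < 0

/-- Condition (h5). -/
def CondH5 (h : ℝ → ℝ → ℝ) : Prop :=
  ∃ ρ : ℝ → ℝ → ℝ, Continuous (Function.uncurry ρ) ∧ (∀ s s' : ℝ, 0 < ρ s s') ∧
    ∀ x ξ x' ξ' : ℝ, x < ξ → x' < ξ' →
      (∫ s in x..ξ, ∫ s' in x'..ξ', ρ s s') ≤ h x ξ' + h ξ x' - h x x' - h ξ ξ'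

/-- Condition (h6θ). -/
def CondH6 (θ : ℝ) (h : ℝ → ℝ → ℝ) : Prop :=
  (∀ x' : ℝ, ConvexOn ℝ Set.univ fun x => θ * (x - x') ^ 2 / 2 - h x x') ∧
  (∀ x : ℝ, ConvexOn ℝ Set.univ fun x' => θ * (x' - x) ^ 2 / 2 - h x x')

namespace AM

/-- Action sum over a window. -/
noncomputable def Act (h : ℝ → ℝ → ℝ) (x : ℤ → ℝ) (a b : ℤ) : ℝ :=
  ∑ i ∈ Finset.Ico a b, h (x i) (x (i + 1))

lemma isMinSegment_iff (h : ℝ → ℝ → ℝ) (j k : ℤ) (x : ℤ → ℝ) :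
    IsMinSegment h j k x ↔ ∀ y : ℤ → ℝ, y j = x j → y k = x k → Act h x j k ≤ Act h y j k :=
  Iff.rfl

/-- h is invariant under integer diagonal shifts. -/
lemma hshift {h : ℝ → ℝ → ℝ} (h1 : CondH1 h) (m : ℤ) (a b : ℝ) :
    h (a + m) (b + m) = h a b := by
  induction m using Int.induction_on with
  | zero => simp
  | succ n ih =>
      have := h1 (a + n) (b + n)
      push_cast
      push_cast at ih
      calc h (a + (n + 1)) (b + (n + 1)) = h (a + n + 1) (b + n + 1) := by ring_nf
        _ = h (a + n) (b + n) := h1 _ _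
        _ = h a b := ih
  | pred n ih =>
      push_cast at ih ⊢
      have key : h (a + (-(n:ℝ) - 1) + 1) (b + (-(n:ℝ) - 1) + 1)
          = h (a + (-(n:ℝ) - 1)) (b + (-(n:ℝ) - 1)) := h1 _ _
      have e1 : a + (-(n:ℝ) - 1) + 1 = a + -(n:ℝ) := by ring
      have e2 : b + (-(n:ℝ) - 1) + 1 = b + -(n:ℝ) := by ring
      rw [e1, e2] at key
      rw [← key]
      exact ih

/-- Reindexing a sum over `Ico` by a shift. -/
lemma sum_shift (f : ℤ → ℝ) (a b c : ℤ) :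
    ∑ i ∈ Finset.Ico (a + c) (b + c), f i = ∑ i ∈ Finset.Ico a b, f (i + c) := by
  rw [← Finset.map_add_right_Ico a b c, Finset.sum_map]
  rfl


/-- Translated configuration: shift index by `j`, shift value by integer `m`. -/
def Tr (x : ℤ → ℝ) (j m : ℤ) : ℤ → ℝ := fun i => x (i + j) + m

lemma Act_Tr {h : ℝ → ℝ → ℝ} (h1 : CondH1 h) (x : ℤ → ℝ) (j m a b : ℤ) :
    Act h (Tr x j m) a b = Act h x (a + j) (b + j) := by
  unfold Act Tr
  rw [sum_shift (fun i => h (x i) (x (i + 1))) a b j]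
  refine Finset.sum_congr rfl ?_
  intro i _
  have : i + 1 + j = i + j + 1 := by ring
  rw [this, hshift h1 m]

lemma translate_minimal {h : ℝ → ℝ → ℝ} (h1 : CondH1 h) {x : ℤ → ℝ}
    (hx : MinimalConfig h x) (j m : ℤ) : MinimalConfig h (Tr x j m) := by
  intro a b hab y hya hyb
  show Act h (Tr x j m) a b ≤ Act h y a b
  rw [Act_Tr h1]
  have h2 : Act h y a b = Act h (Tr y (-j) (-m)) (a + j) (b + j) := by
    rw [Act_Tr h1]
    congr 1 <;> ring
  rw [h2]
  refine hx (a + j) (b + j) (by omega) (Tr y (-j) (-m)) ?_ ?_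
  · show y (a + j + -j) + ((-m : ℤ) : ℝ) = x (a + j)
    rw [show a + j + -j = a by ring, hya]
    show x (a + j) + (m : ℝ) + ((-m : ℤ) : ℝ) = x (a + j)
    push_cast; ring
  · show y (b + j + -j) + ((-m : ℤ) : ℝ) = x (b + j)
    rw [show b + j + -j = b by ring, hyb]
    show x (b + j) + (m : ℝ) + ((-m : ℤ) : ℝ) = x (b + j)
    push_cast; ring

lemma Act_update {h : ℝ → ℝ → ℝ} (x : ℤ → ℝ) (r t c : ℤ) (hrc : r < c) (hct : c < t) (m : ℝ) :
    Act h (Function.update x c m) r t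
      = Act h x r t
        + ((h (x (c - 1)) m + h m (x (c + 1))) - (h (x (c - 1)) (x c) + h (x c) (x (c + 1)))) := by
  classical
  set y := Function.update x c m with hy
  have hyc : y c = m := Function.update_self c m x
  have hyne : ∀ i : ℤ, i ≠ c → y i = x i := fun i hi => Function.update_of_ne hi m x
  have hsub : ({c - 1, c} : Finset ℤ) ⊆ Finset.Ico r t := by
    intro i hi
    simp only [Finset.mem_insert, Finset.mem_singleton] at hi
    rcases hi with rfl | rfl <;> simp [Finset.mem_Ico] <;> omega
  have hzero : ∀ i ∈ Finset.Ico r t, i ∉ ({c - 1, c} : Finset ℤ) →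
      h (y i) (y (i + 1)) - h (x i) (x (i + 1)) = 0 := by
    intro i _ hi
    simp only [Finset.mem_insert, Finset.mem_singleton, not_or] at hi
    rw [hyne i hi.2, hyne (i + 1) (by omega)]
    ring
  have hpair : ∑ i ∈ ({c - 1, c} : Finset ℤ), (h (y i) (y (i + 1)) - h (x i) (x (i + 1)))
      = ∑ i ∈ Finset.Ico r t, (h (y i) (y (i + 1)) - h (x i) (x (i + 1))) :=
    Finset.sum_subset hsub hzero
  have hne : (c - 1 : ℤ) ≠ c := by omega
  rw [Finset.sum_pair hne] at hpair
  have e1 : c - 1 + 1 = c := by ring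
  have hsum : ∑ i ∈ Finset.Ico r t, (h (y i) (y (i + 1)) - h (x i) (x (i + 1)))
      = Act h y r t - Act h x r t := by
    unfold Act; rw [Finset.sum_sub_distrib]
  rw [hsum] at hpair
  rw [hyne (c - 1) (by omega), hyne (c + 1) (by omega), e1, hyc] at hpair
  linarith

lemma exch_le {h : ℝ → ℝ → ℝ} (h3 : CondH3 h) (a b a' b' : ℝ) :
    h (min a b) (min a' b') + h (max a b) (max a' b') ≤ h a a' + h b b' := by
  rcases le_total a b with hab | hab <;> rcases le_total a' b' with hcd | hcd
  · rw [min_eq_left hab, min_eq_left hcd, max_eq_right hab, max_eq_right hcd]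
  · rcases eq_or_lt_of_le hab with rfl | hab'
    · rw [min_self, max_self, min_eq_right hcd, max_eq_left hcd]; try linarith
    · rcases eq_or_lt_of_le hcd with rfl | hcd'
      · rw [min_self, max_self, min_eq_left hab, max_eq_right hab]; try linarith
      · rw [min_eq_left hab, min_eq_right hcd, max_eq_right hab, max_eq_left hcd]
        have := h3 a b b' a' hab' hcd'
        linarith
  · rcases eq_or_lt_of_le hab with rfl | hab'
    · rw [min_self, max_self, min_eq_left hcd, max_eq_right hcd]; try linarith
    · rcases eq_or_lt_of_le hcd with rfl | hcd'
      · rw [min_self, max_self, min_eq_right hab, max_eq_left hab]; try linarith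
      · rw [min_eq_right hab, min_eq_left hcd, max_eq_left hab, max_eq_right hcd]
        have := h3 b a a' b' hab' hcd'
        linarith
  · rw [min_eq_right hab, min_eq_right hcd, max_eq_left hab, max_eq_left hcd]; linarith

lemma exch_lt {h : ℝ → ℝ → ℝ} (h3 : CondH3 h) {a b a' b' : ℝ} (hab : a < b) (hcd : b' < a') :
    h (min a b) (min a' b') + h (max a b) (max a' b') < h a a' + h b b' := by
  rw [min_eq_left hab.le, min_eq_right hcd.le, max_eq_right hab.le, max_eq_left hcd.le]
  have := h3 a b b' a' hab hcd
  linarith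


/-- Aubry's crossing lemma: two minimal configurations cannot cross twice
(sign pattern `-,+,-` for `x - z` is impossible). -/
lemma no_double_cross {h : ℝ → ℝ → ℝ} (h3 : CondH3 h) (h4 : CondH4 h)
    {x z : ℤ → ℝ} (hx : MinimalConfig h x) (hz : MinimalConfig h z)
    {r s t : ℤ} (hrs : r < s) (hst : s < t)
    (hr : x r < z r) (hs : z s < x s) (ht : x t < z t) : False := by
  classical
  set v : ℤ → ℝ := fun i => min (x i) (z i) with hv
  set u : ℤ → ℝ := fun i => max (x i) (z i) with hu
  set g : ℤ → ℝ := fun i =>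
    h (x i) (x (i + 1)) + h (z i) (z (i + 1)) - h (v i) (v (i + 1)) - h (u i) (u (i + 1)) with hg
  have hgnn : ∀ i : ℤ, 0 ≤ g i := by
    intro i
    have := exch_le h3 (x i) (z i) (x (i + 1)) (z (i + 1))
    simp only [hg, hv, hu]
    linarith
  have hrt : r < t := hrs.trans hst
  have hvr : v r = x r := min_eq_left hr.le
  have hvt : v t = x t := min_eq_left ht.le
  have hur : u r = z r := max_eq_right hr.le
  have hut : u t = z t := max_eq_right ht.le
  have hAv : Act h x r t ≤ Act h v r t := hx r t hrt v hvr hvt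
  have hAu : Act h z r t ≤ Act h u r t := hz r t hrt u hur hut
  have hsumg : ∑ i ∈ Finset.Ico r t, g i
      = Act h x r t + Act h z r t - Act h v r t - Act h u r t := by
    unfold Act
    rw [← Finset.sum_add_distrib, ← Finset.sum_sub_distrib, ← Finset.sum_sub_distrib]
  have hsum0 : ∑ i ∈ Finset.Ico r t, g i = 0 := by
    have h1' : ∑ i ∈ Finset.Ico r t, g i ≤ 0 := by rw [hsumg]; linarith
    have h2' : 0 ≤ ∑ i ∈ Finset.Ico r t, g i := Finset.sum_nonneg fun i _ => hgnn i
    linarith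
  have hgzero : ∀ i ∈ Finset.Ico r t, g i = 0 := by
    have := (Finset.sum_eq_zero_iff_of_nonneg fun i _ => hgnn i).mp hsum0
    exact this
  have hAveq : Act h v r t = Act h x r t := by rw [hsumg] at hsum0; linarith
  have hAueq : Act h u r t = Act h z r t := by rw [hsumg] at hsum0; linarith
  -- the last index `c` in `[r, s)` where `x ≤ z`
  set S : Finset ℤ := (Finset.Ico r s).filter (fun i => x i ≤ z i) with hS
  have hSne : S.Nonempty := ⟨r, by simp [hS, Finset.mem_filter, Finset.mem_Ico, hrs, hr.le]⟩
  obtain ⟨c, hcS, hcub⟩ : ∃ c ∈ S, ∀ i ∈ S, i ≤ c :=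
    ⟨S.max' hSne, S.max'_mem hSne, fun i hi => S.le_max' i hi⟩
  have hcIco : c ∈ Finset.Ico r s := (Finset.mem_filter.mp hcS).1
  have hcle : x c ≤ z c := (Finset.mem_filter.mp hcS).2
  have hcs : c < s := (Finset.mem_Ico.mp hcIco).2
  have hrc : r ≤ c := (Finset.mem_Ico.mp hcIco).1
  have hc1 : z (c + 1) < x (c + 1) := by
    rcases eq_or_lt_of_le (show c + 1 ≤ s by omega) with heq | hlt
    · rw [heq]; exact hs
    · by_contra hle
      push_neg at hle
      have hmem : c + 1 ∈ S := by
        simp only [hS, Finset.mem_filter, Finset.mem_Ico]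
        exact ⟨⟨by omega, hlt⟩, hle⟩
      have := hcub _ hmem
      omega
  rcases eq_or_lt_of_le hcle with hceq | hclt
  · -- tangency at integer c : use h4
    have hrc' : r < c := by
      rcases eq_or_lt_of_le hrc with rfl | h'
      · exact absurd hceq (ne_of_lt hr)
      · exact h'
    have hct : c < t := hcs.trans hst
    have hminv : ∀ y : ℤ → ℝ, y r = v r → y t = v t → Act h v r t ≤ Act h y r t := by
      intro y hyr hyt
      rw [hAveq]
      exact hx r t hrt y (by rw [hyr, hvr]) (by rw [hyt, hvt])
    have hminu : ∀ y : ℤ → ℝ, y r = u r → y t = u t → Act h u r t ≤ Act h y r t := by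
      intro y hyr hyt
      rw [hAueq]
      exact hz r t hrt y (by rw [hyr, hur]) (by rw [hyt, hut])
    have htripv : MinTriple h (v (c - 1)) (v c) (v (c + 1)) := by
      intro m
      have hle := hminv (Function.update v c m)
        (Function.update_of_ne (by omega) m v) (Function.update_of_ne (by omega) m v)
      rw [Act_update v r t c hrc' hct m] at hle
      linarith
    have htripu : MinTriple h (u (c - 1)) (u c) (u (c + 1)) := by
      intro m
      have hle := hminu (Function.update u c m)
        (Function.update_of_ne (by omega) m u) (Function.update_of_ne (by omega) m u)
      rw [Act_update u r t c hrc' hct m] at hle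
      linarith
    have hucvc : u c = v c := by
      simp only [hu, hv]
      rw [hceq, min_self, max_self]
    rw [hucvc] at htripu
    have hne : u (c + 1) ≠ v (c + 1) := by
      simp only [hu, hv]
      rw [max_eq_left hc1.le, min_eq_right hc1.le]
      exact hc1.ne'
    have hprod := h4 (u (c - 1)) (v c) (u (c + 1)) (v (c - 1)) (v (c + 1))
      htripu htripv (Or.inr hne)
    have f1 : 0 ≤ u (c - 1) - v (c - 1) := by
      simp only [hu, hv]; have := min_le_max (a := x (c-1)) (b := z (c-1)); linarith
    have f2 : 0 ≤ u (c + 1) - v (c + 1) := by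
      simp only [hu, hv]; have := min_le_max (a := x (c+1)) (b := z (c+1)); linarith
    nlinarith [mul_nonneg f1 f2]
  · -- transversal crossing at step (c, c+1): strict exchange inequality
    have hgc : 0 < g c := by
      have := exch_lt h3 hclt hc1
      simp only [hg, hv, hu]
      linarith
    have : g c = 0 := hgzero c (Finset.mem_Ico.mpr ⟨hrc, hcs.trans hst⟩)
    linarith


/-- sum over consecutive integer intervals. -/
lemma sum_Ico_consec (f : ℤ → ℝ) {a b c : ℤ} (hab : a ≤ b) (hbc : b ≤ c) :
    ∑ i ∈ Finset.Ico a b, f i + ∑ i ∈ Finset.Ico b c, f i = ∑ i ∈ Finset.Ico a c, f i := by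
  rw [← Finset.sum_union (Finset.Ico_disjoint_Ico_consecutive a b c),
    Finset.Ico_union_Ico_eq_Ico hab hbc]

/-- `(q,p)`-periodic configuration. -/
def Per (q p : ℤ) (z : ℤ → ℝ) : Prop := ∀ i, z (i + q) = z i + p

lemma per_summand {h : ℝ → ℝ → ℝ} (h1 : CondH1 h) {q p : ℤ} {z : ℤ → ℝ} (hz : Per q p z)
    (i : ℤ) : h (z (i + q)) (z (i + q + 1)) = h (z i) (z (i + 1)) := by
  have e : i + q + 1 = i + 1 + q := by ring
  rw [e, hz i, hz (i + 1), hshift h1]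

lemma periodic_sum_window_le {f : ℤ → ℝ} {q : ℤ} (hq : 0 ≤ q) (hf : ∀ i, f (i + q) = f i)
    {N M : ℤ} (hNM : N ≤ M) :
    ∑ i ∈ Finset.Ico N (N + q), f i = ∑ i ∈ Finset.Ico M (M + q), f i := by
  have h1 : ∑ i ∈ Finset.Ico N (N + q), f i + ∑ i ∈ Finset.Ico (N + q) (M + q), f i
      = ∑ i ∈ Finset.Ico N (M + q), f i :=
    sum_Ico_consec f (show N ≤ N + q by omega) (show N + q ≤ M + q by omega)
  have h2 : ∑ i ∈ Finset.Ico N M, f i + ∑ i ∈ Finset.Ico M (M + q), f i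
      = ∑ i ∈ Finset.Ico N (M + q), f i :=
    sum_Ico_consec f (show N ≤ M by omega) (show M ≤ M + q by omega)
  have h3 : ∑ i ∈ Finset.Ico (N + q) (M + q), f i = ∑ i ∈ Finset.Ico N M, f i := by
    rw [sum_shift f N M q]
    exact Finset.sum_congr rfl fun i _ => hf i
  linarith

lemma periodic_sum_window {f : ℤ → ℝ} {q : ℤ} (hq : 0 ≤ q) (hf : ∀ i, f (i + q) = f i)
    (N M : ℤ) :
    ∑ i ∈ Finset.Ico N (N + q), f i = ∑ i ∈ Finset.Ico M (M + q), f i := by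
  rcases le_total N M with hNM | hNM
  · exact periodic_sum_window_le hq hf hNM
  · exact (periodic_sum_window_le hq hf hNM).symm

lemma periodic_sum_mul {f : ℤ → ℝ} {q : ℤ} (hq : 0 ≤ q) (hf : ∀ i, f (i + q) = f i) (m : ℕ) :
    ∑ i ∈ Finset.Ico (0 : ℤ) (m * q), f i = m * ∑ i ∈ Finset.Ico (0 : ℤ) q, f i := by
  induction m with
  | zero => simp
  | succ m ih =>
      have h1 : ∑ i ∈ Finset.Ico (0 : ℤ) (m * q), f i
          + ∑ i ∈ Finset.Ico (m * q : ℤ) (m * q + q), f i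
          = ∑ i ∈ Finset.Ico (0 : ℤ) ((m + 1 : ℕ) * q), f i := by
        have e : ((m + 1 : ℕ) : ℤ) * q = (m : ℤ) * q + q := by push_cast; ring
        rw [e]
        exact sum_Ico_consec f
          (mul_nonneg (Int.natCast_nonneg m) hq) (by omega)
      have h2 : ∑ i ∈ Finset.Ico (m * q : ℤ) (m * q + q), f i
          = ∑ i ∈ Finset.Ico (0 : ℤ) (0 + q), f i := periodic_sum_window hq hf _ _
      rw [← h1, ih, h2]
      push_cast
      rw [show (0:ℤ) + q = q by ring]
      ring

lemma per_Tr {q p : ℤ} {z : ℤ → ℝ} (hz : Per q p z) (j m : ℤ) : Per q p (Tr z j m) := by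
  intro i
  show z (i + q + j) + (m:ℝ) = z (i + j) + (m:ℝ) + p
  rw [show i + q + j = i + j + q by ring, hz (i + j)]
  ring

lemma per_min {q p : ℤ} {z w : ℤ → ℝ} (hz : Per q p z) (hw : Per q p w) :
    Per q p (fun i => min (z i) (w i)) := by
  intro i
  show min (z (i + q)) (w (i + q)) = min (z i) (w i) + p
  rw [hz, hw, min_add_add_right]

lemma per_max {q p : ℤ} {z w : ℤ → ℝ} (hz : Per q p z) (hw : Per q p w) :
    Per q p (fun i => max (z i) (w i)) := by
  intro i
  show max (z (i + q)) (w (i + q)) = max (z i) (w i) + p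
  rw [hz, hw, max_add_add_right]

/-- global lower bound for `h`. -/
lemma global_lower_bound {h : ℝ → ℝ → ℝ} (hcont : Continuous (Function.uncurry h))
    (h1 : CondH1 h) (h2 : CondH2 h) :
    ∃ c0 : ℝ, c0 ≤ 0 ∧ ∀ a b : ℝ, c0 ≤ h a b := by
  obtain ⟨R, hR⟩ := h2 0
  set R' : ℝ := max R 1 with hR'
  set K : Set (ℝ × ℝ) := Set.Icc (0:ℝ) 1 ×ˢ Set.Icc (-R') (1 + R') with hK
  have hKc : IsCompact K := (isCompact_Icc).prod isCompact_Icc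
  have hR1 : (1:ℝ) ≤ R' := le_max_right R 1
  have hKne : K.Nonempty :=
    ⟨(0, 0), ⟨⟨le_refl 0, zero_le_one⟩,
      ⟨show -R' ≤ (0:ℝ) by linarith, show (0:ℝ) ≤ 1 + R' by linarith⟩⟩⟩
  obtain ⟨pm, hpmK, hpm⟩ := hKc.exists_isMinOn hKne hcont.continuousOn
  refine ⟨min (Function.uncurry h pm) 0, min_le_right _ _, ?_⟩
  intro a b
  rcases le_or_gt R' |b - a| with hbig | hsmall
  · have := hR a (b - a) (le_trans (le_max_left R 1) hbig)
    rw [show a + (b - a) = b by ring] at this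
    exact le_trans (min_le_right _ _) this
  · set m : ℤ := ⌊a⌋ with hm
    have hfr : a - m ∈ Set.Icc (0:ℝ) 1 := ⟨by
      have := Int.floor_le a; linarith, by
      have := Int.lt_floor_add_one a; linarith⟩
    have hsnd : b - m ∈ Set.Icc (-R') (1 + R') := by
      have h1' := hfr.1
      have h2' := hfr.2
      have hb1 : |b - a| ≤ R' := hsmall.le
      rw [abs_le] at hb1
      constructor <;> [nlinarith [hb1.1]; nlinarith [hb1.2]]
    have hmem : ((a - m : ℝ), (b - m : ℝ)) ∈ K := ⟨hfr, hsnd⟩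
    have hkey : h a b = h (a - m) (b - m) := by
      have := hshift h1 m (a - m) (b - m)
      rw [show a - (m:ℝ) + m = a by ring, show b - (m:ℝ) + m = b by ring] at this
      exact this
    rw [hkey]
    exact le_trans (min_le_left _ _) (isMinOn_iff.mp hpm _ hmem)

/-- upper bound for `h` on diagonal strips. -/
lemma strip_upper_bound {h : ℝ → ℝ → ℝ} (hcont : Continuous (Function.uncurry h))
    (h1 : CondH1 h) (r : ℝ) (hr : 0 ≤ r) :
    ∃ M : ℝ, ∀ a b : ℝ, |b - a| ≤ r → h a b ≤ M := by
  set K : Set (ℝ × ℝ) := Set.Icc (0:ℝ) 1 ×ˢ Set.Icc (-r) (1 + r) with hK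
  have hKc : IsCompact K := (isCompact_Icc).prod isCompact_Icc
  have hKne : K.Nonempty :=
    ⟨(0, 0), ⟨⟨le_refl 0, zero_le_one⟩,
      ⟨show -r ≤ (0:ℝ) by linarith, show (0:ℝ) ≤ 1 + r by linarith⟩⟩⟩
  obtain ⟨pm, hpmK, hpm⟩ := hKc.exists_isMaxOn hKne hcont.continuousOn
  refine ⟨Function.uncurry h pm, ?_⟩
  intro a b hab
  set m : ℤ := ⌊a⌋ with hm
  have hfr : a - m ∈ Set.Icc (0:ℝ) 1 := ⟨by
    have := Int.floor_le a; linarith, by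
    have := Int.lt_floor_add_one a; linarith⟩
  have hsnd : b - m ∈ Set.Icc (-r) (1 + r) := by
    rw [abs_le] at hab
    constructor <;> [nlinarith [hab.1, hfr.1]; nlinarith [hab.2, hfr.2]]
  have hmem : ((a - m : ℝ), (b - m : ℝ)) ∈ K := ⟨hfr, hsnd⟩
  have hkey : h a b = h (a - m) (b - m) := by
    have := hshift h1 m (a - m) (b - m)
    rw [show a - (m:ℝ) + m = a by ring, show b - (m:ℝ) + m = b by ring] at this
    exact this
  rw [hkey]
  exact isMaxOn_iff.mp hpm _ hmem


/-- Existence of a `(q,p)`-periodic minimizer of the action over one period. -/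
lemma exists_periodic_minimizer {h : ℝ → ℝ → ℝ} (hcont : Continuous (Function.uncurry h))
    (h1 : CondH1 h) (h2 : CondH2 h) (q p : ℤ) (hq : 1 ≤ q) :
    ∃ z : ℤ → ℝ, Per q p z ∧ ∀ w : ℤ → ℝ, Per q p w → Act h z 0 q ≤ Act h w 0 q := by
  classical
  obtain ⟨c0, hc00, hc0⟩ := global_lower_bound hcont h1 h2
  have hq' : (1:ℝ) ≤ (q:ℝ) := by exact_mod_cast hq
  have hqpos : (0:ℝ) < (q:ℝ) := by linarith
  set ω : ℝ := (p:ℝ) / (q:ℝ) with hω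
  have hωq : ω * q = (p:ℝ) := by rw [hω, div_mul_cancel₀ _ (ne_of_gt hqpos)]
  have hωabs : |ω| * (q:ℝ) ≤ |(p:ℝ)| := by
    rw [hω, abs_div, abs_of_pos hqpos, div_mul_cancel₀]
    exact ne_of_gt hqpos
  have hωle : |ω| ≤ |(p:ℝ)| := by nlinarith [abs_nonneg ω]
  obtain ⟨Ms, hMs⟩ := strip_upper_bound hcont h1 |(p:ℝ)| (abs_nonneg _)
  set zaff : ℤ → ℝ := fun i => ω * i with hzaff
  have hperaff : Per q p zaff := by
    intro i
    show ω * ((i + q : ℤ) : ℝ) = ω * i + p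
    push_cast
    rw [mul_add, hωq]
  have haffstep : ∀ i : ℤ, |zaff (i + 1) - zaff i| ≤ |(p:ℝ)| := by
    intro i
    show |ω * ((i + 1 : ℤ):ℝ) - ω * (i:ℝ)| ≤ |(p:ℝ)|
    push_cast
    rw [show ω * ((i:ℝ) + 1) - ω * i = ω by ring]
    exact hωle
  have hAaff : Act h zaff 0 q ≤ (q:ℝ) * Ms := by
    have hb : ∀ i ∈ Finset.Ico (0:ℤ) q, h (zaff i) (zaff (i + 1)) ≤ Ms :=
      fun i _ => hMs _ _ (haffstep i)
    have hsum := Finset.sum_le_card_nsmul _ _ _ hb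
    have hcard : (Finset.Ico (0:ℤ) q).card = q.toNat := by
      rw [Int.card_Ico]
      norm_num
    rw [hcard, nsmul_eq_mul] at hsum
    have hcast : ((q.toNat : ℕ) : ℝ) = (q:ℝ) := by
      exact_mod_cast congrArg (Int.cast : ℤ → ℝ) (Int.toNat_of_nonneg (by omega : (0:ℤ) ≤ q))
    rwa [hcast] at hsum
  set Mbig : ℝ := (q:ℝ) * Ms + 1 - ((q:ℝ) - 1) * c0 with hMbig
  obtain ⟨R, hR⟩ := h2 Mbig
  set R' : ℝ := max R 1 with hR'def
  have hR'1 : (1:ℝ) ≤ R' := le_max_right _ _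
  set B : ℝ := (q:ℝ) * R' + 1 + |(p:ℝ)| with hB
  have hBpos : 0 ≤ B := by positivity
  set K : Set (ℤ → ℝ) :=
    {z | Per q p z ∧ z 0 ∈ Set.Icc (0:ℝ) 1 ∧ ∀ i : ℤ, z i - ω * i ∈ Set.Icc (-B) B} with hK
  have hKclosed : IsClosed K := by
    have e : K = {z : ℤ → ℝ | Per q p z} ∩ ({z | z 0 ∈ Set.Icc (0:ℝ) 1} ∩
        ⋂ i : ℤ, {z | z i - ω * i ∈ Set.Icc (-B) B}) := by
      ext z
      simp only [hK, Set.mem_setOf_eq, Set.mem_inter_iff, Set.mem_iInter]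
    rw [e]
    refine IsClosed.inter ?_ (IsClosed.inter ?_ ?_)
    · have e2 : {z : ℤ → ℝ | Per q p z} = ⋂ i : ℤ, {z : ℤ → ℝ | z (i + q) = z i + p} := by
        ext z
        simp only [Set.mem_setOf_eq, Set.mem_iInter]
        rfl
      rw [e2]
      exact isClosed_iInter fun i =>
        isClosed_eq (continuous_apply _) ((continuous_apply _).add continuous_const)
    · exact IsClosed.preimage (continuous_apply 0) isClosed_Icc
    · exact isClosed_iInter fun i =>
        IsClosed.preimage ((continuous_apply i).sub continuous_const) isClosed_Icc
  have hKsub : K ⊆ Set.pi Set.univ (fun i : ℤ => Set.Icc (ω * i - B) (ω * i + B)) := by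
    intro z hz i _
    obtain ⟨-, -, h3'⟩ := hz
    have := h3' i
    constructor <;> [linarith [this.1]; linarith [this.2]]
  have hKcomp : IsCompact K :=
    IsCompact.of_isClosed_subset (isCompact_univ_pi fun i => isCompact_Icc) hKclosed hKsub
  have hzaffK : zaff ∈ K := by
    refine ⟨hperaff, ?_, ?_⟩
    · show ω * ((0:ℤ):ℝ) ∈ Set.Icc (0:ℝ) 1
      norm_num
    · intro i
      show ω * i - ω * i ∈ Set.Icc (-B) B
      rw [sub_self]
      exact ⟨by linarith, by linarith⟩
  have hKne : K.Nonempty := ⟨zaff, hzaffK⟩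
  have hFcont : Continuous fun z : ℤ → ℝ => Act h z 0 q := by
    unfold Act
    refine continuous_finset_sum _ fun i _ => ?_
    have : Continuous fun z : ℤ → ℝ => Function.uncurry h (z i, z (i + 1)) :=
      hcont.comp ((continuous_apply i).prodMk (continuous_apply (i + 1)))
    exact this
  obtain ⟨z, hzK, hzmin⟩ := hKcomp.exists_isMinOn hKne hFcont.continuousOn
  refine ⟨z, hzK.1, ?_⟩
  intro w hw
  set w' : ℤ → ℝ := Tr w 0 (-⌊w 0⌋) with hw'
  have hperw' : Per q p w' := per_Tr hw 0 _
  have hActw' : Act h w' 0 q = Act h w 0 q := by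
    rw [hw', Act_Tr h1 w 0 (-⌊w 0⌋) 0 q]
    norm_num
  have hw'0a : w' 0 = w 0 - ⌊w 0⌋ := by
    show w (0 + 0) + ((-⌊w 0⌋ : ℤ) : ℝ) = w 0 - ⌊w 0⌋
    rw [show ((0:ℤ) + 0) = (0:ℤ) by norm_num]
    push_cast
    ring
  have hw'0 : w' 0 ∈ Set.Icc (0:ℝ) 1 := by
    rw [hw'0a]
    constructor
    · linarith [Int.floor_le (w 0)]
    · linarith [Int.lt_floor_add_one (w 0)]
  rw [← hActw']
  by_cases hcase : ∀ i : ℤ, w' i - ω * i ∈ Set.Icc (-B) B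
  · exact isMinOn_iff.mp hzmin w' ⟨hperw', hw'0, hcase⟩
  · push_neg at hcase
    obtain ⟨i0, hi0⟩ := hcase
    set dev : ℤ → ℝ := fun i => w' i - ω * (i:ℝ) with hdev
    have hdevper : ∀ i : ℤ, dev (i + q) = dev i := by
      intro i
      show w' (i + q) - ω * ((i + q : ℤ):ℝ) = w' i - ω * (i:ℝ)
      rw [hperw' i]
      push_cast
      rw [mul_add, hωq]
      ring
    have hdevshift : ∀ (k i : ℤ), dev (i + k * q) = dev i := by
      intro k
      induction k using Int.induction_on with
      | zero => intro i; norm_num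
      | succ n ih =>
          intro i
          have e : i + ((n:ℤ) + 1) * q = (i + n * q) + q := by ring
          rw [e, hdevper (i + n * q), ih i]
      | pred n ih =>
          intro i
          have e : i + (-(n:ℤ) - 1) * q + q = i + (-(n:ℤ)) * q := by ring
          have h' := hdevper (i + (-(n:ℤ) - 1) * q)
          rw [e] at h'
          rw [← h']
          exact ih i
    have hstep : ∃ j ∈ Finset.Ico (0:ℤ) q, R' ≤ |w' (j + 1) - w' j| := by
      by_contra hsteps
      push_neg at hsteps
      have hA : ∀ n : ℕ, (n:ℤ) ≤ q → |w' (n:ℤ) - w' 0| ≤ (n:ℝ) * R' := by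
        intro n
        induction n with
        | zero => intro _; norm_num
        | succ n ih =>
            intro hn
            have hn' : (n:ℤ) ≤ q := by push_cast at hn ⊢; omega
            have h1' := ih hn'
            have hmem : (n:ℤ) ∈ Finset.Ico (0:ℤ) q := by
              rw [Finset.mem_Ico]
              refine ⟨Int.natCast_nonneg n, ?_⟩
              push_cast at hn
              omega
            have h2' := (hsteps _ hmem).le
            have e : ((n + 1 : ℕ):ℤ) = (n:ℤ) + 1 := by push_cast; ring
            rw [e]
            have t1 : |w' ((n:ℤ) + 1) - w' 0| ≤ |w' ((n:ℤ) + 1) - w' (n:ℤ)| + |w' (n:ℤ) - w' 0| := by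
              rw [show w' ((n:ℤ) + 1) - w' 0
                = (w' ((n:ℤ) + 1) - w' (n:ℤ)) + (w' (n:ℤ) - w' 0) by ring]
              exact abs_add_le _ _
            push_cast
            linarith
      have hbnd : dev i0 ∈ Set.Icc (-B) B := by
        have hq2 : (0:ℤ) < q := by omega
        have hr1 : 0 ≤ i0 % q := Int.emod_nonneg i0 (by omega)
        have hr2 : i0 % q < q := Int.emod_lt_of_pos i0 hq2
        have hmod : dev i0 = dev (i0 % q) := by
          conv_lhs => rw [show i0 = i0 % q + (i0 / q) * q by
            rw [mul_comm]
            exact (Int.emod_add_mul_ediv i0 q).symm]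
          exact hdevshift (i0 / q) (i0 % q)
        rw [hmod]
        set j : ℤ := i0 % q
        have hj0 : |w' j - w' 0| ≤ (q:ℝ) * R' := by
          have hA' := hA j.toNat (by omega)
          rw [Int.toNat_of_nonneg hr1] at hA'
          have hcastj : ((j.toNat : ℕ) : ℝ) ≤ (q:ℝ) := by
            exact_mod_cast (show ((j.toNat : ℕ) : ℤ) ≤ q by omega)
          calc |w' j - w' 0| ≤ ((j.toNat : ℕ) : ℝ) * R' := hA'
            _ ≤ (q:ℝ) * R' := mul_le_mul_of_nonneg_right hcastj (by linarith)
        have hωj : |ω * (j:ℝ)| ≤ |(p:ℝ)| := by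
          have hja : |(j:ℝ)| ≤ (q:ℝ) := by
            rw [abs_of_nonneg (by exact_mod_cast hr1 : (0:ℝ) ≤ (j:ℝ))]
            exact_mod_cast hr2.le
          rw [abs_mul]
          calc |ω| * |(j:ℝ)| ≤ |ω| * (q:ℝ) := mul_le_mul_of_nonneg_left hja (abs_nonneg ω)
            _ ≤ |(p:ℝ)| := hωabs
        have hw'0b : |w' 0| ≤ 1 := by
          rw [abs_le]
          exact ⟨by linarith [hw'0.1], hw'0.2⟩
        have habs : |dev j| ≤ B := by
          have e1 : dev j = (w' j - w' 0) + w' 0 - ω * (j:ℝ) := by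
            show w' j - ω * (j:ℝ) = (w' j - w' 0) + w' 0 - ω * (j:ℝ)
            ring
          rw [e1]
          calc |(w' j - w' 0) + w' 0 - ω * (j:ℝ)|
              ≤ |(w' j - w' 0) + w' 0| + |ω * (j:ℝ)| := abs_sub _ _
            _ ≤ |w' j - w' 0| + |w' 0| + |ω * (j:ℝ)| := by
                linarith [abs_add_le (w' j - w' 0) (w' 0)]
            _ ≤ (q:ℝ) * R' + 1 + |(p:ℝ)| := by linarith
        rw [abs_le] at habs
        exact ⟨habs.1, habs.2⟩
      exact hi0 hbnd
    obtain ⟨j, hjmem, hjbig⟩ := hstep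
    have hterm : Mbig ≤ h (w' j) (w' (j + 1)) := by
      have := hR (w' j) (w' (j + 1) - w' j) (le_trans (le_max_left R 1) hjbig)
      rwa [show w' j + (w' (j + 1) - w' j) = w' (j + 1) by ring] at this
    have hrest : ((q.toNat - 1 : ℕ) : ℝ) * c0 ≤
        ∑ i ∈ (Finset.Ico (0:ℤ) q).erase j, h (w' i) (w' (i + 1)) := by
      have hsum := Finset.card_nsmul_le_sum ((Finset.Ico (0:ℤ) q).erase j)
        (fun i => h (w' i) (w' (i + 1))) c0 (fun i _ => hc0 _ _)
      have hcard : ((Finset.Ico (0:ℤ) q).erase j).card = q.toNat - 1 := by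
        rw [Finset.card_erase_of_mem hjmem, Int.card_Ico]
        norm_num
      rw [hcard, nsmul_eq_mul] at hsum
      exact hsum
    have hsplit : Act h w' 0 q
        = h (w' j) (w' (j + 1)) + ∑ i ∈ (Finset.Ico (0:ℤ) q).erase j, h (w' i) (w' (i + 1)) := by
      unfold Act
      rw [← Finset.add_sum_erase _ _ hjmem]
    have hcast2 : ((q.toNat - 1 : ℕ) : ℝ) = (q:ℝ) - 1 := by
      have : ((q.toNat - 1 : ℕ) : ℤ) = q - 1 := by omega
      exact_mod_cast this
    have hbig : (q:ℝ) * Ms + 1 ≤ Act h w' 0 q := by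
      rw [hsplit]
      rw [hcast2] at hrest
      have he : Mbig + ((q:ℝ) - 1) * c0 = (q:ℝ) * Ms + 1 := by rw [hMbig]; ring
      linarith
    have hzle : Act h z 0 q ≤ Act h zaff 0 q := isMinOn_iff.mp hzmin zaff hzaffK
    linarith


lemma per_iter {q p : ℤ} {z : ℤ → ℝ} (hz : Per q p z) (m : ℕ) :
    Per ((m:ℤ) * q) ((m:ℤ) * p) z := by
  induction m with
  | zero => intro i; norm_num
  | succ m ih =>
      intro i
      have e : i + ((m + 1 : ℕ) : ℤ) * q = (i + (m:ℤ) * q) + q := by push_cast; ring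
      rw [e, hz (i + (m:ℤ) * q), ih i]
      push_cast
      ring

lemma exch_sum {h : ℝ → ℝ → ℝ} (h3 : CondH3 h) (a b : ℤ) (x z : ℤ → ℝ) :
    Act h (fun i => min (x i) (z i)) a b + Act h (fun i => max (x i) (z i)) a b
      ≤ Act h x a b + Act h z a b := by
  unfold Act
  rw [← Finset.sum_add_distrib, ← Finset.sum_add_distrib]
  exact Finset.sum_le_sum fun i _ => exch_le h3 _ _ _ _

lemma inf'_congr_set {β : Type*} (s t : Finset β) (hst : s = t) (hs : s.Nonempty)
    (f : β → ℝ) : s.inf' hs f = t.inf' (hst ▸ hs) f := by subst hst; rfl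

/-- A `(q,p)`-periodic minimizer also minimizes the action among
`(mq, mp)`-periodic configurations. -/
lemma periodic_minimizer_refine {h : ℝ → ℝ → ℝ} (hcont : Continuous (Function.uncurry h))
    (h1 : CondH1 h) (h2 : CondH2 h) (h3 : CondH3 h) (q p : ℤ) (hq : 1 ≤ q)
    {z : ℤ → ℝ} (hperz : Per q p z) (hzmin : ∀ w : ℤ → ℝ, Per q p w → Act h z 0 q ≤ Act h w 0 q)
    (m : ℕ) (hm : 1 ≤ m) :
    ∀ w : ℤ → ℝ, Per ((m:ℤ) * q) ((m:ℤ) * p) w →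
      Act h z 0 ((m:ℤ) * q) ≤ Act h w 0 ((m:ℤ) * q) := by
  classical
  set Q : ℤ := (m:ℤ) * q with hQdef
  set P : ℤ := (m:ℤ) * p with hPdef
  have hQ1 : 1 ≤ Q := by
    have : (1:ℤ) * 1 ≤ (m:ℤ) * q := by
      apply mul_le_mul <;> omega
    omega
  have hQ0 : (0:ℤ) ≤ Q := by omega
  obtain ⟨u, hperu, humin⟩ := exists_periodic_minimizer hcont h1 h2 Q P hQ1
  -- the translates θ^l u
  set T : ℕ → ℤ → ℝ := fun l => Tr u ((l:ℤ) * q) (-(l:ℤ) * p) with hT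
  have hperT : ∀ l : ℕ, Per Q P (T l) := fun l => per_Tr hperu _ _
  have hfper : ∀ v : ℤ → ℝ, Per Q P v → ∀ i,
      h (v (i + Q)) (v (i + Q + 1)) = h (v i) (v (i + 1)) := fun v hv i => per_summand h1 hv i
  have hActT : ∀ l : ℕ, Act h (T l) 0 Q = Act h u 0 Q := by
    intro l
    rw [hT]
    show Act h (Tr u ((l:ℤ) * q) (-(l:ℤ) * p)) 0 Q = Act h u 0 Q
    rw [Act_Tr h1]
    show Act h u (0 + (l:ℤ) * q) (Q + (l:ℤ) * q) = Act h u 0 Q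
    unfold Act
    have e1 : (0:ℤ) + (l:ℤ) * q = (l:ℤ) * q := by ring
    have e2 : Q + (l:ℤ) * q = (l:ℤ) * q + Q := by ring
    rw [e1, e2]
    have := periodic_sum_window (f := fun i => h (u i) (u (i + 1))) hQ0
      (fun i => hfper u hperu i) ((l:ℤ) * q) 0
    rw [this]
    norm_num
  -- successive minima
  set A : ℝ := Act h u 0 Q with hA
  have hpair : ∀ v1 v2 : ℤ → ℝ, Per Q P v1 → Per Q P v2 →
      Act h v1 0 Q = A → Act h v2 0 Q = A →
      Per Q P (fun i => min (v1 i) (v2 i)) ∧ Act h (fun i => min (v1 i) (v2 i)) 0 Q = A := by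
    intro v1 v2 hp1 hp2 ha1 ha2
    have hpmin : Per Q P (fun i => min (v1 i) (v2 i)) := per_min hp1 hp2
    have hpmax : Per Q P (fun i => max (v1 i) (v2 i)) := per_max hp1 hp2
    have hex := exch_sum h3 0 Q v1 v2
    have hge1 : A ≤ Act h (fun i => min (v1 i) (v2 i)) 0 Q := humin _ hpmin
    have hge2 : A ≤ Act h (fun i => max (v1 i) (v2 i)) 0 Q := humin _ hpmax
    exact ⟨hpmin, by linarith⟩
  set G : ℕ → ℤ → ℝ := fun l i => (Finset.range (l + 1)).inf' (by simp) (fun j => T j i) with hG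
  have hGrec : ∀ l : ℕ, ∀ i : ℤ, G (l + 1) i = min (T (l + 1) i) (G l i) := by
    intro l i
    show (Finset.range (l + 1 + 1)).inf' (by simp) (fun j => T j i)
        = min (T (l + 1) i) ((Finset.range (l + 1)).inf' (by simp) (fun j => T j i))
    rw [inf'_congr_set _ _ (Finset.range_add_one (n := l + 1)) _ (fun j => T j i)]
    exact Finset.inf'_insert _ _
  have hG0 : ∀ i, G 0 i = T 0 i := by
    intro i
    show (Finset.range 1).inf' (by simp) (fun j => T j i) = T 0 i
    exact le_antisymm (Finset.inf'_le _ (by simp))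
      (Finset.le_inf' _ _ (fun j hj => by simp at hj; subst hj; rfl))
  have hGprop : ∀ l : ℕ, Per Q P (G l) ∧ Act h (G l) 0 Q = A := by
    intro l
    induction l with
    | zero =>
        have he : G 0 = T 0 := funext hG0
        rw [he]
        exact ⟨hperT 0, hActT 0⟩
    | succ l ih =>
        have he : G (l + 1) = fun i => min (T (l + 1) i) (G l i) := funext (hGrec l)
        rw [he]
        exact hpair _ _ (hperT (l + 1)) ih.1 (hActT (l + 1)) ih.2
  -- step relation for the translates
  have hTstep : ∀ (l : ℕ) (i : ℤ), T l (i + q) = T (l + 1) i + p := by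
    intro l i
    show u (i + q + (l:ℤ) * q) + ((-(l:ℤ) * p : ℤ) : ℝ)
      = u (i + ((l:ℕ) + 1 : ℤ) * q) + ((-((l:ℕ) + 1 : ℤ) * p : ℤ) : ℝ) + p
    rw [show i + q + (l:ℤ) * q = i + ((l:ℤ) + 1) * q by ring]
    push_cast
    ring_nf
  have hTm : ∀ i, T m i = T 0 i := by
    intro i
    show u (i + (m:ℤ) * q) + ((-(m:ℤ) * p : ℤ) : ℝ) = u (i + (0:ℤ) * q) + ((-(0:ℤ) * p : ℤ) : ℝ)
    rw [show i + (m:ℤ) * q = i + Q by rw [hQdef], hperu i,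
      show i + (0:ℤ) * q = i by ring, hPdef]
    push_cast
    ring
  -- G (m-1) is (q,p)-periodic
  have hGm : Per q p (G (m - 1)) := by
    intro i
    have hm1 : m - 1 + 1 = m := by omega
    have hmem : ∀ j : ℕ, j ∈ Finset.range m ↔ j < m := fun j => Finset.mem_range
    -- inf over range m
    have hGdef : ∀ i' : ℤ, G (m - 1) i' = (Finset.range m).inf'
        (by rw [Finset.nonempty_range_iff]; omega) (fun j => T j i') := by
      intro i'
      show (Finset.range (m - 1 + 1)).inf' (by simp) (fun j => T j i')
          = (Finset.range m).inf' (by rw [Finset.nonempty_range_iff]; omega) (fun j => T j i')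
      exact inf'_congr_set _ _ (by rw [hm1]) _ (fun j => T j i')
    rw [hGdef (i + q), hGdef i]
    apply le_antisymm
    · -- LHS ≤ inf + p
      obtain ⟨l0, hl0mem, hl0⟩ := Finset.exists_mem_eq_inf' (s := Finset.range m)
        (by rw [Finset.nonempty_range_iff]; omega) (fun j => T j i)
      rw [hl0]
      rcases Nat.eq_zero_or_pos l0 with rfl | hl0pos
      · -- use l = m - 1
        have hkey : T (m - 1) (i + q) = T 0 i + p := by
          rw [hTstep (m - 1) i, hm1, hTm]
        calc (Finset.range m).inf' _ (fun j => T j (i + q)) ≤ T (m - 1) (i + q) :=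
              Finset.inf'_le _ (by rw [Finset.mem_range]; omega)
          _ = T 0 i + p := hkey
      · have hkey : T (l0 - 1) (i + q) = T l0 i + p := by
          rw [hTstep (l0 - 1) i, show l0 - 1 + 1 = l0 by omega]
        calc (Finset.range m).inf' _ (fun j => T j (i + q)) ≤ T (l0 - 1) (i + q) :=
              Finset.inf'_le _ (by rw [Finset.mem_range] at hl0mem ⊢; omega)
          _ = T l0 i + p := hkey
    · -- inf + p ≤ LHS
      obtain ⟨l1, hl1mem, hl1⟩ := Finset.exists_mem_eq_inf' (s := Finset.range m)
        (by rw [Finset.nonempty_range_iff]; omega) (fun j => T j (i + q))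
      rw [hl1, hTstep l1 i]
      rcases Nat.lt_or_ge (l1 + 1) m with hlt | hge
      · have : (Finset.range m).inf' (by rw [Finset.nonempty_range_iff]; omega) (fun j => T j i)
            ≤ T (l1 + 1) i := Finset.inf'_le _ (by rw [Finset.mem_range]; omega)
        linarith
      · have hl1m : l1 + 1 = m := by rw [Finset.mem_range] at hl1mem; omega
        rw [hl1m, hTm]
        have : (Finset.range m).inf' (by rw [Finset.nonempty_range_iff]; omega) (fun j => T j i)
            ≤ T 0 i := Finset.inf'_le _ (by rw [Finset.mem_range]; omega)
        linarith
  -- conclusion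
  intro w hw
  have hsplitz : Act h z 0 Q = (m:ℝ) * Act h z 0 q := by
    rw [hQdef]
    exact periodic_sum_mul (by omega) (fun i => per_summand h1 hperz i) m
  have hsplitG : Act h (G (m - 1)) 0 Q = (m:ℝ) * Act h (G (m - 1)) 0 q := by
    rw [hQdef]
    exact periodic_sum_mul (by omega) (fun i => per_summand h1 hGm i) m
  have hzG : Act h z 0 q ≤ Act h (G (m - 1)) 0 q := hzmin _ hGm
  have hGA : Act h (G (m - 1)) 0 Q = A := (hGprop (m - 1)).2
  have hwA : A ≤ Act h w 0 Q := humin w hw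
  have hm' : (0:ℝ) ≤ (m:ℝ) := by positivity
  calc Act h z 0 Q = (m:ℝ) * Act h z 0 q := hsplitz
    _ ≤ (m:ℝ) * Act h (G (m - 1)) 0 q := by
        exact mul_le_mul_of_nonneg_left hzG hm'
    _ = Act h (G (m - 1)) 0 Q := hsplitG.symm
    _ = A := hGA
    _ ≤ Act h w 0 Q := hwA


/-- A `(q,p)`-periodic action minimizer is a minimal configuration. -/
lemma periodic_minimizer_minimal {h : ℝ → ℝ → ℝ} (hcont : Continuous (Function.uncurry h))
    (h1 : CondH1 h) (h2 : CondH2 h) (h3 : CondH3 h) (q p : ℤ) (hq : 1 ≤ q)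
    {z : ℤ → ℝ} (hperz : Per q p z)
    (hzmin : ∀ w : ℤ → ℝ, Per q p w → Act h z 0 q ≤ Act h w 0 q) :
    MinimalConfig h z := by
  classical
  intro j k hjk y hyj hyk
  show Act h z j k ≤ Act h y j k
  obtain ⟨m, hm1, hm2⟩ : ∃ m : ℕ, 1 ≤ m ∧ k - j < (m:ℤ) * q := by
    refine ⟨(k - j).toNat + 1, by omega, ?_⟩
    have hmq : (((k - j).toNat + 1 : ℕ) : ℤ) ≤ (((k - j).toNat + 1 : ℕ) : ℤ) * q :=
      le_mul_of_one_le_right (by positivity) hq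
    omega
  set Q : ℤ := (m:ℤ) * q with hQdef
  set P : ℤ := (m:ℤ) * p with hPdef
  have hperzQ : Per Q P z := per_iter hperz m
  have hQ1 : 1 ≤ Q := by
    have : (1:ℤ) * 1 ≤ (m:ℤ) * q := by
      apply mul_le_mul <;> omega
    omega
  have hkQ : k < j + Q := by omega
  set base : ℤ → ℝ := fun i => if i ≤ k then y i else z i with hbase
  set w : ℤ → ℝ := fun i => base (j + (i - j) % Q) + (((i - j) / Q : ℤ) : ℝ) * (P:ℝ) with hwdef
  have hperw : Per Q P w := by
    intro i
    show base (j + (i + Q - j) % Q) + (((i + Q - j) / Q : ℤ) : ℝ) * (P:ℝ)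
        = base (j + (i - j) % Q) + (((i - j) / Q : ℤ) : ℝ) * (P:ℝ) + (P:ℝ)
    have e : i + Q - j = (i - j) + Q * 1 := by ring
    rw [e, Int.add_mul_emod_self_left, Int.add_mul_ediv_left _ _ (by omega : Q ≠ 0)]
    push_cast
    ring
  have hwin : ∀ i : ℤ, j ≤ i → i < j + Q → w i = base i := by
    intro i hji hiQ
    show base (j + (i - j) % Q) + (((i - j) / Q : ℤ) : ℝ) * (P:ℝ) = base i
    rw [Int.emod_eq_of_lt (by omega) (by omega), Int.ediv_eq_zero_of_lt (by omega) (by omega)]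
    rw [show j + (i - j) = i by ring]
    push_cast
    ring
  have hwtop : w (j + Q) = z (j + Q) := by
    have e : j + Q - j = 0 + Q * 1 := by ring
    show base (j + (j + Q - j) % Q) + (((j + Q - j) / Q : ℤ) : ℝ) * (P:ℝ) = z (j + Q)
    rw [e, Int.add_mul_emod_self_left, Int.add_mul_ediv_left _ _ (by omega : Q ≠ 0)]
    norm_num
    have hbj : base j = z j := by
      show (if j ≤ k then y j else z j) = z j
      rw [if_pos (by omega), hyj]
    rw [hbj, hperzQ j]
  -- action of w over the fundamental window
  have hwy : ∀ i ∈ Finset.Ico j k, h (w i) (w (i + 1)) = h (y i) (y (i + 1)) := by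
    intro i hi
    rw [Finset.mem_Ico] at hi
    rw [hwin i (by omega) (by omega), hwin (i + 1) (by omega) (by omega)]
    have hb1 : base i = y i := by
      show (if i ≤ k then y i else z i) = y i
      rw [if_pos (by omega)]
    have hb2 : base (i + 1) = y (i + 1) := by
      show (if i + 1 ≤ k then y (i + 1) else z (i + 1)) = y (i + 1)
      rw [if_pos (by omega)]
    rw [hb1, hb2]
  have hwz : ∀ i ∈ Finset.Ico k (j + Q), h (w i) (w (i + 1)) = h (z i) (z (i + 1)) := by
    intro i hi
    rw [Finset.mem_Ico] at hi
    have hb1 : w i = z i := by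
      rw [hwin i (by omega) (by omega)]
      show (if i ≤ k then y i else z i) = z i
      rcases eq_or_lt_of_le hi.1 with rfl | hik
      · rw [if_pos (le_refl _), hyk]
      · rw [if_neg (by omega)]
    have hb2 : w (i + 1) = z (i + 1) := by
      rcases eq_or_lt_of_le (show i + 1 ≤ j + Q by omega) with heq | hlt
      · rw [heq, hwtop]
      · rw [hwin (i + 1) (by omega) hlt]
        show (if i + 1 ≤ k then y (i + 1) else z (i + 1)) = z (i + 1)
        rw [if_neg (by omega)]
    rw [hb1, hb2]
  have hsplitw : Act h w j (j + Q) = Act h y j k + Act h z k (j + Q) := by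
    unfold Act
    rw [← sum_Ico_consec (fun i => h (w i) (w (i + 1))) (by omega : j ≤ k) (by omega : k ≤ j + Q)]
    congr 1
    · exact Finset.sum_congr rfl hwy
    · exact Finset.sum_congr rfl hwz
  have hsplitz : Act h z j (j + Q) = Act h z j k + Act h z k (j + Q) := by
    unfold Act
    rw [← sum_Ico_consec (fun i => h (z i) (z (i + 1))) (by omega : j ≤ k) (by omega : k ≤ j + Q)]
  -- compare via the refined minimizer property
  have hzw : Act h z j (j + Q) ≤ Act h w j (j + Q) := by
    have hz0 : Act h z j (j + Q) = Act h z 0 Q := by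
      unfold Act
      have := periodic_sum_window (f := fun i => h (z i) (z (i + 1))) (by omega)
        (fun i => per_summand h1 hperzQ i) j 0
      rw [this]
      norm_num
    have hw0 : Act h w j (j + Q) = Act h w 0 Q := by
      unfold Act
      have := periodic_sum_window (f := fun i => h (w i) (w (i + 1))) (by omega)
        (fun i => per_summand h1 hperw i) j 0
      rw [this]
      norm_num
    rw [hz0, hw0]
    exact periodic_minimizer_refine hcont h1 h2 h3 q p hq hperz hzmin m hm1 w hperw
  rw [hsplitw, hsplitz] at hzw
  linarith


/-- A periodic minimal configuration does not cross its translates. -/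
lemma translate_dichotomy {h : ℝ → ℝ → ℝ} (h1 : CondH1 h) (h3 : CondH3 h) (h4 : CondH4 h)
    {q p : ℤ} (hq : 1 ≤ q) {z : ℤ → ℝ} (hz : MinimalConfig h z) (hper : Per q p z)
    (j c : ℤ) :
    (∀ i : ℤ, z i ≤ z (i + j) + (c:ℝ)) ∨ (∀ i : ℤ, z (i + j) + (c:ℝ) ≤ z i) := by
  set w : ℤ → ℝ := Tr z j c with hw
  have hwmin : MinimalConfig h w := translate_minimal h1 hz j c
  have hσper : ∀ i : ℤ, w (i + q) - z (i + q) = w i - z i := by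
    intro i
    show (z (i + q + j) + (c:ℝ)) - z (i + q) = (z (i + j) + (c:ℝ)) - z i
    rw [show i + q + j = (i + j) + q by ring, hper (i + j), hper i]
    ring
  have hσshift : ∀ (K : ℕ) (i : ℤ), w (i + (K:ℤ) * q) - z (i + (K:ℤ) * q) = w i - z i := by
    intro K
    induction K with
    | zero => intro i; norm_num
    | succ K ih =>
        intro i
        have e : i + ((K + 1 : ℕ):ℤ) * q = (i + (K:ℤ) * q) + q := by push_cast; ring
        rw [e, hσper (i + (K:ℤ) * q), ih i]
  by_contra hcon
  push_neg at hcon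
  obtain ⟨⟨t1, ht1⟩, ⟨t0, ht0⟩⟩ := hcon
  -- ht1 : w t1 < z t1 (as ¬ (z t1 ≤ w t1)), ht0 : w t0 > z t0
  have ht1' : w t1 < z t1 := ht1
  have ht0' : z t0 < w t0 := ht0
  rcases lt_trichotomy t0 t1 with hlt | heq | hgt
  · obtain ⟨K, hK⟩ : ∃ K : ℕ, t1 < t0 + (K:ℤ) * q := by
      refine ⟨(t1 - t0).toNat + 1, ?_⟩
      have : (((t1 - t0).toNat + 1 : ℕ) : ℤ) ≤ (((t1 - t0).toNat + 1 : ℕ) : ℤ) * q :=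
        le_mul_of_one_le_right (by positivity) hq
      omega
    have hsig : z (t0 + (K:ℤ) * q) < w (t0 + (K:ℤ) * q) := by
      have := hσshift K t0
      linarith
    exact no_double_cross h3 h4 hz hwmin hlt hK ht0' ht1' hsig
  · rw [heq] at ht0'
    linarith
  · obtain ⟨K, hK⟩ : ∃ K : ℕ, t0 < t1 + (K:ℤ) * q := by
      refine ⟨(t0 - t1).toNat + 1, ?_⟩
      have : (((t0 - t1).toNat + 1 : ℕ) : ℤ) ≤ (((t0 - t1).toNat + 1 : ℕ) : ℤ) * q :=
        le_mul_of_one_le_right (by positivity) hq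
      omega
    have hsig : w (t1 + (K:ℤ) * q) < z (t1 + (K:ℤ) * q) := by
      have := hσshift K t1
      linarith
    exact no_double_cross h3 h4 hwmin hz hgt hK ht1' ht0' hsig

/-- quasi-additivity of a periodic minimal configuration. -/
lemma periodic_quasi_add {h : ℝ → ℝ → ℝ} (h1 : CondH1 h) (h3 : CondH3 h) (h4 : CondH4 h)
    {q p : ℤ} (hq : 1 ≤ q) {z : ℤ → ℝ} (hz : MinimalConfig h z) (hper : Per q p z)
    (t j : ℤ) : |(z (t + j) - z t) - (z j - z 0)| ≤ 2 := by
  set c1 : ℤ := ⌊z 0 - z j⌋ with hc1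
  have hc1a : (c1:ℝ) ≤ z 0 - z j := Int.floor_le _
  have hc1b : z 0 - z j < c1 + 1 := Int.lt_floor_add_one _
  have hupper : z (t + j) - z t - (z j - z 0) ≤ 2 := by
    rcases translate_dichotomy h1 h3 h4 hq hz hper j c1 with hD1 | hD2
    · -- equality at 0 is forced; go one lower
      rcases translate_dichotomy h1 h3 h4 hq hz hper j (c1 - 1) with hD1' | hD2'
      · have := hD1' 0
        rw [show (0:ℤ) + j = j by ring] at this
        push_cast at this
        linarith
      · have := hD2' t
        push_cast at this
        linarith
    · have := hD2 t
      linarith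
  have hlower : -(2:ℝ) ≤ z (t + j) - z t - (z j - z 0) := by
    rcases translate_dichotomy h1 h3 h4 hq hz hper j (c1 + 1) with hD1 | hD2
    · have := hD1 t
      push_cast at this
      linarith
    · have := hD2 0
      rw [show (0:ℤ) + j = j by ring] at this
      push_cast at this
      linarith
  rw [abs_le]
  constructor <;> linarith

/-- width estimate for periodic minimal configurations. -/
lemma periodic_width {h : ℝ → ℝ → ℝ} (h1 : CondH1 h) (h3 : CondH3 h) (h4 : CondH4 h)
    {q p : ℤ} (hq : 1 ≤ q) {z : ℤ → ℝ} (hz : MinimalConfig h z) (hper : Per q p z)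
    (i : ℤ) : |z i - z 0 - ((p:ℝ) / (q:ℝ)) * i| ≤ 2 := by
  set a : ℤ → ℝ := fun i => z i - z 0 with ha
  have hqa : ∀ (n : ℕ), 1 ≤ n → ∀ i : ℤ, |a ((n:ℤ) * i) - (n:ℝ) * a i| ≤ 2 * (n:ℝ) - 2 := by
    intro n
    induction n with
    | zero => omega
    | succ n ih =>
        intro _ i
        rcases Nat.eq_zero_or_pos n with rfl | hn
        · rw [show ((0 + 1 : ℕ):ℤ) * i = i by push_cast; ring]
          push_cast
          rw [show a i - 1 * a i = 0 by ring]
          norm_num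
        · have h1' := ih hn i
          have h2' := periodic_quasi_add h1 h3 h4 hq hz hper ((n:ℤ) * i) i
          have e : ((n + 1 : ℕ):ℤ) * i = (n:ℤ) * i + i := by push_cast; ring
          rw [e]
          have e2 : a ((n:ℤ) * i + i) - ((n + 1 : ℕ):ℝ) * a i
              = ((z ((n:ℤ) * i + i) - z ((n:ℤ) * i)) - (z i - z 0))
                + (a ((n:ℤ) * i) - (n:ℝ) * a i) := by
            show z ((n:ℤ) * i + i) - z 0 - ((n + 1 : ℕ):ℝ) * (z i - z 0)
              = ((z ((n:ℤ) * i + i) - z ((n:ℤ) * i)) - (z i - z 0))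
                + ((z ((n:ℤ) * i) - z 0) - (n:ℝ) * (z i - z 0))
            push_cast
            ring
          rw [e2]
          calc |((z ((n:ℤ) * i + i) - z ((n:ℤ) * i)) - (z i - z 0))
                + (a ((n:ℤ) * i) - (n:ℝ) * a i)|
              ≤ |(z ((n:ℤ) * i + i) - z ((n:ℤ) * i)) - (z i - z 0)|
                + |a ((n:ℤ) * i) - (n:ℝ) * a i| := abs_add_le _ _
            _ ≤ 2 + (2 * (n:ℝ) - 2) := by linarith
            _ = 2 * ((n + 1 : ℕ):ℝ) - 2 := by push_cast; ring
  have hzq : ∀ i : ℤ, z (q * i) = z 0 + (p:ℝ) * i := by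
    intro i
    induction i using Int.induction_on with
    | zero => norm_num
    | succ n ih =>
        have e : q * ((n:ℤ) + 1) = q * n + q := by ring
        rw [e, hper (q * n), ih]
        push_cast
        ring
    | pred n ih =>
        have e : q * (-(n:ℤ) - 1) + q = q * (-(n:ℤ)) := by ring
        have h' := hper (q * (-(n:ℤ) - 1))
        rw [e] at h'
        have : z (q * (-(n:ℤ) - 1)) = z (q * (-(n:ℤ))) - p := by linarith
        rw [this, ih]
        push_cast
        ring
  have hq0 : (0:ℝ) < (q:ℝ) := by
    have : (1:ℝ) ≤ (q:ℝ) := by exact_mod_cast hq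
    linarith
  have hmain := hqa q.toNat (by omega) i
  have hqt : ((q.toNat : ℕ) : ℤ) = q := Int.toNat_of_nonneg (by omega)
  rw [hqt] at hmain
  have hqtr : ((q.toNat : ℕ) : ℝ) = (q:ℝ) := by exact_mod_cast congrArg (Int.cast : ℤ → ℝ) hqt
  rw [hqtr] at hmain
  have haq : a (q * i) = (p:ℝ) * i := by
    show z (q * i) - z 0 = (p:ℝ) * i
    rw [hzq i]
    ring
  rw [haq] at hmain
  -- divide by q
  have hgoal : |(p:ℝ) * i - (q:ℝ) * a i| ≤ 2 * (q:ℝ) - 2 := hmain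
  have e3 : z i - z 0 - ((p:ℝ) / (q:ℝ)) * i = -(((p:ℝ) * i - (q:ℝ) * a i) / (q:ℝ)) := by
    show z i - z 0 - ((p:ℝ) / (q:ℝ)) * i = -(((p:ℝ) * i - (q:ℝ) * (z i - z 0)) / (q:ℝ))
    field_simp
    ring
  rw [e3, abs_neg, abs_div, abs_of_pos hq0]
  rw [div_le_iff₀ hq0]
  calc |(p:ℝ) * i - (q:ℝ) * a i| ≤ 2 * (q:ℝ) - 2 := hgoal
    _ ≤ 2 * (q:ℝ) := by linarith
    _ = 2 * (q:ℝ) := by ring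

/-- Existence of periodic minimal configurations of each rational slope, with width ≤ 2. -/
lemma exists_periodic_minimal_config {h : ℝ → ℝ → ℝ} (hcont : Continuous (Function.uncurry h))
    (h1 : CondH1 h) (h2 : CondH2 h) (h3 : CondH3 h) (h4 : CondH4 h)
    (q p : ℤ) (hq : 1 ≤ q) :
    ∃ z : ℤ → ℝ, MinimalConfig h z ∧ Per q p z ∧
      ∀ i : ℤ, |z i - z 0 - ((p:ℝ) / (q:ℝ)) * i| ≤ 2 := by
  obtain ⟨z, hperz, hzmin⟩ := exists_periodic_minimizer hcont h1 h2 q p hq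
  have hmin : MinimalConfig h z := periodic_minimizer_minimal hcont h1 h2 h3 q p hq hperz hzmin
  exact ⟨z, hmin, hperz, fun i => periodic_width h1 h3 h4 hq hmin hperz i⟩


/-- The fundamental displacement estimate for minimal configurations with a
forward rotation number. -/
lemma displacement_bound {h : ℝ → ℝ → ℝ} (hcont : Continuous (Function.uncurry h))
    (h1 : CondH1 h) (h2 : CondH2 h) (h3 : CondH3 h) (h4 : CondH4 h)
    {x : ℤ → ℝ} (hx : MinimalConfig h x)
    {β : ℝ} (hβ : Tendsto (fun n : ℕ => x n / n) atTop (𝓝 β))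
    (n : ℤ) (hn : 1 ≤ n) : |x n - x 0 - (n:ℝ) * β| ≤ 4 := by
  have hn' : (0:ℝ) < (n:ℝ) := by exact_mod_cast (by omega : (0:ℤ) < n)
  by_contra habs
  push_neg at habs
  rw [lt_abs] at habs
  rcases habs with hup | hdown
  · -- x n is too high : fence from above with slope ω ∈ (β, (x n - x 0 - 3)/n)
    have hint : β < (x n - x 0 - 3) / (n:ℝ) := by
      rw [lt_div_iff₀ hn']
      nlinarith
    obtain ⟨ω₀, hω1, hω2⟩ := exists_rat_btwn hint
    set q : ℤ := (ω₀.den : ℤ) with hqdef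
    set p : ℤ := ω₀.num with hpdef
    have hq : 1 ≤ q := by
      have := ω₀.pos
      omega
    set ω : ℝ := (p:ℝ) / (q:ℝ) with hωdef
    have hωeq : ((ω₀ : ℚ) : ℝ) = ω := by
      rw [Rat.cast_def, hωdef, hpdef, hqdef]
      push_cast
      ring
    obtain ⟨z0, hz0min, hz0per, hz0w⟩ := exists_periodic_minimal_config hcont h1 h2 h3 h4 q p hq
    set m : ℤ := ⌊x 0 - z0 0⌋ + 1 with hmdef
    set z : ℤ → ℝ := fun i => z0 i + (m:ℝ) with hzdef
    have hzmin : MinimalConfig h z := by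
      have e : Tr z0 0 m = z := funext fun i => by
        show z0 (i + 0) + (m:ℝ) = z0 i + (m:ℝ)
        rw [add_zero]
      rw [← e]
      exact translate_minimal h1 hz0min 0 m
    have hmlow : x 0 - z0 0 < (m:ℝ) := by
      rw [hmdef]
      push_cast
      linarith [Int.lt_floor_add_one (x 0 - z0 0)]
    have hmhigh : (m:ℝ) ≤ x 0 - z0 0 + 1 := by
      rw [hmdef]
      push_cast
      linarith [Int.floor_le (x 0 - z0 0)]
    have hz0gt : x 0 < z 0 := by
      show x 0 < z0 0 + (m:ℝ)
      linarith
    have hnω : (n:ℝ) * ω < x n - x 0 - 3 := by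
      have h' := hω2
      rw [hωeq, lt_div_iff₀ hn'] at h'
      linarith
    have hzn : z n < x n := by
      have hw := hz0w n
      rw [abs_le] at hw
      show z0 n + (m:ℝ) < x n
      have := hw.2
      nlinarith [hw.2]
    have htail : ∀ i : ℤ, n < i → z i ≤ x i := by
      intro i hi
      by_contra hcon
      push_neg at hcon
      exact no_double_cross h3 h4 hx hzmin (by omega : (0:ℤ) < n) hi hz0gt hzn hcon
    have htail' : ∀ i : ℕ, n < (i:ℤ) → z0 0 + (m:ℝ) + ω * (i:ℝ) - 2 ≤ x (i:ℤ) := by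
      intro i hi
      have ht1 : z (i:ℤ) ≤ x (i:ℤ) := htail _ hi
      have hw := hz0w (i:ℤ)
      rw [abs_le] at hw
      have hw1 := hw.1
      push_cast at hw1
      show z0 0 + (m:ℝ) + ω * (i:ℝ) - 2 ≤ x (i:ℤ)
      have hz : z (i:ℤ) = z0 (i:ℤ) + (m:ℝ) := rfl
      rw [hz] at ht1
      linarith
    have hev : ∀ᶠ i : ℕ in atTop, ω + (z0 0 + (m:ℝ) - 2) / (i:ℝ) ≤ x (i:ℤ) / (i:ℝ) := by
      filter_upwards [Filter.eventually_gt_atTop (n.toNat + 1)] with i hi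
      have hi' : n < (i:ℤ) := by omega
      have hipos : (0:ℝ) < (i:ℝ) := by
        have : 0 < i := by omega
        exact_mod_cast this
      have hxx := htail' i hi'
      have e : ω + (z0 0 + (m:ℝ) - 2) / (i:ℝ) = (z0 0 + (m:ℝ) + ω * (i:ℝ) - 2) / (i:ℝ) := by
        field_simp
        ring
      rw [e]
      gcongr
    have hconst : Tendsto (fun i : ℕ => ω + (z0 0 + (m:ℝ) - 2) / (i:ℝ)) atTop (𝓝 (ω + 0)) :=
      tendsto_const_nhds.add (tendsto_const_div_atTop_nhds_zero_nat _)
    have hβω : ω + 0 ≤ β := le_of_tendsto_of_tendsto hconst hβ hev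
    rw [hωeq] at hω1
    linarith
  · -- x n is too low : fence from below with slope ω ∈ ((x n - x 0 + 3)/n, β)
    have hint : (x n - x 0 + 3) / (n:ℝ) < β := by
      rw [div_lt_iff₀ hn']
      nlinarith
    obtain ⟨ω₀, hω1, hω2⟩ := exists_rat_btwn hint
    set q : ℤ := (ω₀.den : ℤ) with hqdef
    set p : ℤ := ω₀.num with hpdef
    have hq : 1 ≤ q := by
      have := ω₀.pos
      omega
    set ω : ℝ := (p:ℝ) / (q:ℝ) with hωdef
    have hωeq : ((ω₀ : ℚ) : ℝ) = ω := by
      rw [Rat.cast_def, hωdef, hpdef, hqdef]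
      push_cast
      ring
    obtain ⟨z0, hz0min, hz0per, hz0w⟩ := exists_periodic_minimal_config hcont h1 h2 h3 h4 q p hq
    set m : ℤ := ⌈x 0 - z0 0⌉ - 1 with hmdef
    set z : ℤ → ℝ := fun i => z0 i + (m:ℝ) with hzdef
    have hzmin : MinimalConfig h z := by
      have e : Tr z0 0 m = z := funext fun i => by
        show z0 (i + 0) + (m:ℝ) = z0 i + (m:ℝ)
        rw [add_zero]
      rw [← e]
      exact translate_minimal h1 hz0min 0 m
    have hmlow : x 0 - z0 0 - 1 ≤ (m:ℝ) := by
      rw [hmdef]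
      push_cast
      linarith [Int.le_ceil (x 0 - z0 0)]
    have hmhigh : (m:ℝ) < x 0 - z0 0 := by
      rw [hmdef]
      push_cast
      linarith [Int.ceil_lt_add_one (x 0 - z0 0)]
    have hz0lt : z 0 < x 0 := by
      show z0 0 + (m:ℝ) < x 0
      linarith
    have hnω : x n - x 0 + 3 < (n:ℝ) * ω := by
      have h' := hω1
      rw [hωeq] at h'
      rw [div_lt_iff₀ hn'] at h'
      linarith
    have hzn : x n < z n := by
      have hw := hz0w n
      rw [abs_le] at hw
      show x n < z0 n + (m:ℝ)
      nlinarith [hw.1]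
    have htail : ∀ i : ℤ, n < i → x i ≤ z i := by
      intro i hi
      by_contra hcon
      push_neg at hcon
      exact no_double_cross h3 h4 hzmin hx (by omega : (0:ℤ) < n) hi hz0lt hzn hcon
    have htail' : ∀ i : ℕ, n < (i:ℤ) → x (i:ℤ) ≤ z0 0 + (m:ℝ) + ω * (i:ℝ) + 2 := by
      intro i hi
      have ht1 : x (i:ℤ) ≤ z (i:ℤ) := htail _ hi
      have hw := hz0w (i:ℤ)
      rw [abs_le] at hw
      have hw2 := hw.2
      push_cast at hw2
      have hz : z (i:ℤ) = z0 (i:ℤ) + (m:ℝ) := rfl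
      rw [hz] at ht1
      linarith
    have hev : ∀ᶠ i : ℕ in atTop, x (i:ℤ) / (i:ℝ) ≤ ω + (z0 0 + (m:ℝ) + 2) / (i:ℝ) := by
      filter_upwards [Filter.eventually_gt_atTop (n.toNat + 1)] with i hi
      have hi' : n < (i:ℤ) := by omega
      have hipos : (0:ℝ) < (i:ℝ) := by
        have : 0 < i := by omega
        exact_mod_cast this
      have hxx := htail' i hi'
      have e : ω + (z0 0 + (m:ℝ) + 2) / (i:ℝ) = (z0 0 + (m:ℝ) + ω * (i:ℝ) + 2) / (i:ℝ) := by
        field_simp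
        ring
      rw [e]
      gcongr
    have hconst : Tendsto (fun i : ℕ => ω + (z0 0 + (m:ℝ) + 2) / (i:ℝ)) atTop (𝓝 (ω + 0)) :=
      tendsto_const_nhds.add (tendsto_const_div_atTop_nhds_zero_nat _)
    have hβω : β ≤ ω + 0 := le_of_tendsto_of_tendsto hβ hconst hev
    rw [hωeq] at hω2
    linarith

end AM

/-- The rotation number is continuous on minimal configurations (product topology). -/
theorem rotation_number_continuous
    (h : ℝ → ℝ → ℝ) (hcont : Continuous (Function.uncurry h))
    (h1 : CondH1 h) (h2 : CondH2 h) (h3 : CondH3 h) (h4 : CondH4 h)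
    (xs : ℕ → ℤ → ℝ) (hxs : ∀ k : ℕ, MinimalConfig h (xs k))
    (x : ℤ → ℝ) (hx : MinimalConfig h x)
    (hlim : ∀ i : ℤ, Tendsto (fun k : ℕ => xs k i) atTop (𝓝 (x i)))
    (α : ℕ → ℝ) (hα : ∀ k : ℕ, Tendsto (fun n : ℕ => xs k n / n) atTop (𝓝 (α k)))
    (β : ℝ) (hβ : Tendsto (fun n : ℕ => x n / n) atTop (𝓝 β)) :
    Tendsto α atTop (𝓝 β) := by
  rw [Metric.tendsto_atTop]
  intro ε hε
  obtain ⟨n0, hn0⟩ := exists_nat_gt (10 / ε)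
  set N : ℤ := (n0:ℤ) + 1 with hNdef
  have hN1 : (1:ℤ) ≤ N := by omega
  have hNpos : (0:ℝ) < (N:ℝ) := by exact_mod_cast (by omega : (0:ℤ) < N)
  have hbx := AM.displacement_bound hcont h1 h2 h3 h4 hx hβ N hN1
  have hA := hlim N
  have hB := hlim 0
  rw [Metric.tendsto_atTop] at hA hB
  obtain ⟨K1, hK1⟩ := hA 1 one_pos
  obtain ⟨K2, hK2⟩ := hB 1 one_pos
  refine ⟨max K1 K2, ?_⟩
  intro k hk
  have hk1 := hK1 k (le_trans (le_max_left _ _) hk)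
  have hk2 := hK2 k (le_trans (le_max_right _ _) hk)
  rw [Real.dist_eq] at hk1 hk2 ⊢
  have hbk := AM.displacement_bound hcont h1 h2 h3 h4 (hxs k) (hα k) N hN1
  rw [abs_le] at hbx hbk
  rw [abs_lt] at hk1 hk2
  have hkey : |(N:ℝ) * (α k - β)| ≤ 10 := by
    have e : (N:ℝ) * (α k - β)
        = (xs k N - x N) - (xs k 0 - x 0)
          - (xs k N - xs k 0 - (N:ℝ) * α k) + (x N - x 0 - (N:ℝ) * β) := by ring
    rw [e, abs_le]
    constructor <;>
      linarith [hbx.1, hbx.2, hbk.1, hbk.2, hk1.1, hk1.2, hk2.1, hk2.2]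
  have h10 : (N:ℝ) * |α k - β| ≤ 10 := by
    rwa [← abs_of_pos hNpos, ← abs_mul]
  have hne : 10 < (N:ℝ) * ε := by
    have hlt : 10 / ε < (N:ℝ) := by
      have : ((n0:ℤ):ℝ) ≤ (N:ℝ) := by exact_mod_cast (by omega : (n0:ℤ) ≤ N)
      have hcast : ((n0:ℤ):ℝ) = (n0:ℝ) := by push_cast; ring
      rw [hcast] at this
      linarith
    calc (10:ℝ) = (10 / ε) * ε := by field_simp
      _ < (N:ℝ) * ε := mul_lt_mul_of_pos_right hlt hε
  exact lt_of_mul_lt_mul_left (lt_of_le_of_lt h10 hne) hNpos.le
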